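/- For every real x > 0 and every integer m ≥ 1, one has (x/(2m²(1+√x)³))·(1+√x)^{2m} ≤ β_m(x) ≤ (1+√x)^{2m}. -/

import Mathlib

open MeasureTheory ProbabilityTheory Matrix
open scoped NNReal ENNReal

noncomputable section

/-- Borel measurable structure on complex Euclidean space. -/
instance euclideanMeasurableSpaceC (ι : Type*) [Fintype ι] :
    MeasurableSpace (EuclideanSpace ℂ ι) := MeasurableSpace.comap WithLp.ofLp MeasurableSpace.pi

instance euclideanBorelSpaceC (ι : Type*) [Fintype ι] :
    BorelSpace (EuclideanSpace ℂ ι) := PiLp.borelSpace 2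

/-- Lebesgue (Haar) measure on complex Euclidean space. -/
instance euclideanMeasureSpaceC (ι : Type*) [Fintype ι] :
    MeasureSpace (EuclideanSpace ℂ ι) :=
  @MeasureSpace.mk _ (euclideanMeasurableSpaceC ι)
    (@Measure.map _ _ _ (euclideanMeasurableSpaceC ι) (WithLp.toLp 2) (Measure.pi fun _ => volume))

/-- The uniform probability measure on the unit sphere of `ℂ^ι`, viewed as a measure on the
ambient space: the normalized polar-decomposition (cone) measure of the Lebesgue (Haar) measure,
which is the unique rotation-invariant probability measure on the unit sphere. -/
def sphereUniform (ι : Type*) [Fintype ι] : Measure (EuclideanSpace ℂ ι) :=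
  Measure.map Subtype.val
    ((((volume : Measure (EuclideanSpace ℂ ι)).toSphere) Set.univ)⁻¹ •
      (volume : Measure (EuclideanSpace ℂ ι)).toSphere)

/-- The rank-one matrix `|v⟩⟨v|`, with entries `(i,j) ↦ v i * conj (v j)`. -/
def rankOne {n : Type*} [Fintype n] (v : n → ℂ) : Matrix n n ℂ :=
  Matrix.vecMulVec v (star v)

/-- The operator norm (largest singular value) of a complex matrix; for a positive semidefinite
matrix this is its largest eigenvalue. -/
def opNorm {n : Type*} [Fintype n] [DecidableEq n] (A : Matrix n n ℂ) : ℝ :=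
  ‖Matrix.toEuclideanCLM (𝕜 := ℂ) (n := n) A‖

/-- The elementary tensor `v 0 ⊗ ⋯ ⊗ v (k-1)` as a vector of `(ℂ^d)^{⊗k}`,
indexed by `Fin k → Fin d`. -/
def tensorVec {d k : ℕ} (v : Fin k → EuclideanSpace ℂ (Fin d)) : (Fin k → Fin d) → ℂ :=
  fun x => ∏ j, v j (x j)

/-- `M_{p,d,k} = ∑_s |φ_s⟩⟨φ_s|` for the product vectors `φ_s = φ_s^1 ⊗ ⋯ ⊗ φ_s^k`. -/
def ensMatrix {p d k : ℕ} (φ : Fin p → Fin k → EuclideanSpace ℂ (Fin d)) :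
    Matrix (Fin k → Fin d) (Fin k → Fin d) ℂ :=
  ∑ s, rankOne (tensorVec (φ s))

/-- `E_{p,d,k}^m = 𝔼[tr (M_{p,d,k}^m)]` (the trace is a nonnegative real, so we take
the real part). -/
def traceMoment {p d k : ℕ} {Ω : Type} [MeasureSpace Ω]
    (φ : Fin p → Fin k → Ω → EuclideanSpace ℂ (Fin d)) (m : ℕ) : ℝ :=
  ∫ ω, (Matrix.trace ((ensMatrix (fun s j => φ s j ω)) ^ m)).re

/-- `e_{p,d,k}^m = d^{-k}·E_{p,d,k}^m`.  (For `m = 0` this automatically equals `1`.) -/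
def nTraceMoment {p d k : ℕ} {Ω : Type} [MeasureSpace Ω]
    (φ : Fin p → Fin k → Ω → EuclideanSpace ℂ (Fin d)) (m : ℕ) : ℝ :=
  traceMoment φ m / (d : ℝ) ^ k

/-- The `φ s j`, `s ∈ [p]`, `j ∈ [k]`, are independent random vectors, each uniformly
distributed on the unit sphere of `ℂ^d`. -/
def IsUniformEnsemble {p d k : ℕ} {Ω : Type} [MeasureSpace Ω]
    (φ : Fin p → Fin k → Ω → EuclideanSpace ℂ (Fin d)) : Prop :=
  (∀ s j, Measurable (φ s j)) ∧
  iIndepFun (fun sj : Fin p × Fin k => φ sj.1 sj.2) ℙ ∧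
  (∀ s j, Measure.map (φ s j) ℙ = sphereUniform (Fin d))

/-- The `2d` real coordinates of a vector of `ℂ^d`. -/
def realCoord {d : ℕ} (v : EuclideanSpace ℂ (Fin d)) (i : Fin d) (b : Bool) : ℝ :=
  if b then (v i).im else (v i).re

/-- The `φ s j`, `s ∈ [p]`, `j ∈ [k]`, are independent Gaussian vectors in `ℂ^d`: all of their
`2d·p·k` real coordinates are i.i.d. centered real Gaussians of variance `1/(2d)`. -/
def IsGaussianEnsemble {p d k : ℕ} {Ω : Type} [MeasureSpace Ω]
    (φ : Fin p → Fin k → Ω → EuclideanSpace ℂ (Fin d)) : Prop :=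
  (∀ s j, Measurable (φ s j)) ∧
  iIndepFun
    (fun q : Fin p × Fin k × Fin d × Bool =>
      fun ω => realCoord (φ q.1 q.2.1 ω) q.2.2.1 q.2.2.2) ℙ ∧
  (∀ s j i b, Measure.map (fun ω => realCoord (φ s j ω) i b) ℙ
      = gaussianReal 0 (1 / (2 * (d : ℝ≥0))))

/-- Narayana number `N(m,ℓ) = (1/m)·C(m,ℓ-1)·C(m,ℓ)`. -/
def narayana (m ℓ : ℕ) : ℝ := ((m.choose (ℓ - 1)) * (m.choose ℓ) : ℝ) / m

/-- `β_m(x) = ∑_{ℓ=1}^m N(m,ℓ)·x^ℓ`. -/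
def betaPoly (m : ℕ) (x : ℝ) : ℝ := ∑ ℓ ∈ Finset.Icc 1 m, narayana m ℓ * x ^ ℓ

/-- `𝔼[‖M_{p,d,k}‖]`, the expected operator norm. -/
def expOpNorm {p d k : ℕ} {Ω : Type} [MeasureSpace Ω]
    (φ : Fin p → Fin k → Ω → EuclideanSpace ℂ (Fin d)) : ℝ :=
  ∫ ω, opNorm (ensMatrix (fun s j => φ s j ω))

/-- `E_d[s⃗] = 𝔼[tr(φ_{s_1} φ_{s_2} ⋯ φ_{s_m})]` (a nonnegative real; we take the real part). -/
def stringE {p d m : ℕ} {Ω : Type} [MeasureSpace Ω]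
    (φ : Fin p → Ω → EuclideanSpace ℂ (Fin d)) (s : Fin m → Fin p) : ℝ :=
  ∫ ω, (Matrix.trace (List.ofFn fun i => rankOne (φ (s i) ω)).prod).re

/-- `φ_1,…,φ_p` are independent random vectors, each uniformly distributed on the unit
sphere of `ℂ^d`. -/
def IsUniformLetters {p d : ℕ} {Ω : Type} [MeasureSpace Ω]
    (φ : Fin p → Ω → EuclideanSpace ℂ (Fin d)) : Prop :=
  (∀ s, Measurable (φ s)) ∧
  iIndepFun φ ℙ ∧
  (∀ s, Measure.map (φ s) ℙ = sphereUniform (Fin d))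

/-- `φ_1,…,φ_p` are independent Gaussian vectors in `ℂ^d`: all of their `2d·p` real
coordinates are i.i.d. centered real Gaussians of variance `1/(2d)`. -/
def IsGaussianLetters {p d : ℕ} {Ω : Type} [MeasureSpace Ω]
    (φ : Fin p → Ω → EuclideanSpace ℂ (Fin d)) : Prop :=
  (∀ s, Measurable (φ s)) ∧
  iIndepFun
    (fun q : Fin p × Fin d × Bool => fun ω => realCoord (φ q.1 ω) q.2.1 q.2.2) ℙ ∧
  (∀ s i b, Measure.map (fun ω => realCoord (φ s ω) i b) ℙ
      = gaussianReal 0 (1 / (2 * (d : ℝ≥0))))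

/-- One reduction step on strings (as lists): delete one of two equal cyclically adjacent
letters, or delete a letter that occurs exactly once in the string. -/
inductive RedStep {α : Type*} : List α → List α → Prop
  | adj (l₁ : List α) (a : α) (l₂ : List α) : RedStep (l₁ ++ a :: a :: l₂) (l₁ ++ a :: l₂)
  | headLast₁ (a : α) (l : List α) : RedStep (a :: (l ++ [a])) (a :: l)
  | headLast₂ (a : α) (l : List α) : RedStep (a :: (l ++ [a])) (l ++ [a])
  | unique (l₁ : List α) (a : α) (l₂ : List α) (h : a ∉ l₁ ++ l₂) :
      RedStep (l₁ ++ a :: l₂) (l₁ ++ l₂)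

/-- A string is completely reducible if it can be transformed into the empty string by
repeatedly applying the two reduction operations. -/
def CompletelyReducible {α : Type*} (l : List α) : Prop :=
  Relation.ReflTransGen RedStep l List.nil

/-- A string is irreducible if no two cyclically adjacent letters are equal and every letter
occurring in it occurs at least twice. -/
def IrreducibleString {p m : ℕ} (hm : 0 < m) (s : Fin m → Fin p) : Prop :=
  (∀ i : Fin m, s i ≠ s ⟨(i.val + 1) % m, Nat.mod_lt _ hm⟩) ∧
  (∀ a : Fin p, (∃ i, s i = a) → 2 ≤ (Finset.univ.filter fun i => s i = a).card)

/-- The number of cycles (orbits, including fixed points) of a permutation of `Fin m`. -/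
def cycCount {m : ℕ} (ν : Equiv.Perm (Fin m)) : ℕ :=
  ν.cycleType.card + (m - ν.support.card)

/-- `E_{p,d,1}^m = 𝔼[tr(M_{p,d,1}^m)]` for the `k = 1` ensemble. -/
def letterTraceMoment {p d : ℕ} {Ω : Type} [MeasureSpace Ω]
    (φ : Fin p → Ω → EuclideanSpace ℂ (Fin d)) (m : ℕ) : ℝ :=
  ∫ ω, (Matrix.trace ((∑ s, rankOne (φ s ω)) ^ m)).re

/-- `e_{p,d,1}^m = d⁻¹·E_{p,d,1}^m`.  (For `m = 0` this automatically equals `1`.) -/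
def nLetterTraceMoment {p d : ℕ} {Ω : Type} [MeasureSpace Ω]
    (φ : Fin p → Ω → EuclideanSpace ℂ (Fin d)) (m : ℕ) : ℝ :=
  letterTraceMoment φ m / d

/-- The partial trace over the second factor of `|ψ⟩⟨ψ|`, for `ψ ∈ ℂ^{d_A} ⊗ ℂ^{d_B}`. -/
def ptraceB {dA dB : ℕ} (v : EuclideanSpace ℂ (Fin dA × Fin dB)) :
    Matrix (Fin dA) (Fin dA) ℂ :=
  Matrix.of fun i i' => ∑ b, v (i, b) * star (v (i', b))

/-- The tensor product of `k` matrices of size `d × d`, indexed by `Fin k → Fin d`. -/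
def tensorMat {d k : ℕ} (A : Fin k → Matrix (Fin d) (Fin d) ℂ) :
    Matrix (Fin k → Fin d) (Fin k → Fin d) ℂ :=
  Matrix.of fun x y => ∏ j, A j (x j) (y j)

end

noncomputable section

namespace BetaAux

lemma choose_sq_le (n a : ℕ) :
    (n.choose a) ^ 2 ≤ (n+1).choose a * (n+1).choose (a+1) := by
  have h1 : n.choose a ≤ (n+1).choose a := Nat.choose_le_choose a (Nat.le_succ n)
  have h2 : n.choose a ≤ (n+1).choose (a+1) := by
    rw [Nat.choose_succ_succ]; exact Nat.le_add_right _ _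
  calc (n.choose a)^2 = n.choose a * n.choose a := sq _
  _ ≤ _ := Nat.mul_le_mul h1 h2

lemma choose_le_mul (n a : ℕ) (ha : a ≤ n) :
    (n+1).choose a ≤ (n+1) * (n+1).choose (a+1) := by
  have h := Nat.choose_succ_right_eq (n+1) a
  calc (n+1).choose a ≤ (n+1).choose a * (n+1-a) :=
        Nat.le_mul_of_pos_right _ (by omega)
  _ = (n+1).choose (a+1) * (a+1) := h.symm
  _ ≤ (n+1).choose (a+1) * (n+1) := Nat.mul_le_mul_left _ (by omega)
  _ = (n+1)*(n+1).choose (a+1) := Nat.mul_comm _ _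

lemma sum_shift (f : ℕ → ℝ) (n : ℕ) :
    ∑ ℓ ∈ Finset.Icc 1 n, f ℓ = ∑ a ∈ Finset.range n, f (a+1) := by
  induction n with
  | zero => simp
  | succ n ih => rw [Finset.sum_Icc_succ_top (by omega), ih, Finset.sum_range_succ]

lemma betaPoly_eq (n : ℕ) (x : ℝ) :
    betaPoly (n+1) x = ∑ a ∈ Finset.range (n+1), narayana (n+1) (a+1) * x ^ (a+1) :=
  sum_shift _ _

lemma betaPoly_nonneg (m : ℕ) (x : ℝ) (hx : 0 ≤ x) : 0 ≤ betaPoly m x :=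
  Finset.sum_nonneg fun ℓ _ => mul_nonneg
    (div_nonneg (by positivity) (Nat.cast_nonneg m)) (pow_nonneg hx _)

lemma expand (n : ℕ) (t : ℝ) :
    (1+t)^n = ∑ k ∈ Finset.range (n+1), ((n.choose k : ℝ) * t^k) := by
  rw [add_comm 1 t, add_pow]
  exact Finset.sum_congr rfl fun k _ => by ring

lemma upper (n : ℕ) (t : ℝ) (ht : 0 ≤ t) :
    betaPoly (n+1) (t^2) ≤ ((1+t)^(n+1))^2 := by
  rw [betaPoly_eq]
  calc ∑ a ∈ Finset.range (n+1), narayana (n+1) (a+1) * (t^2) ^ (a+1)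
      ≤ ∑ a ∈ Finset.range (n+1), ((((n+1).choose (a+1) : ℝ)) * t^(a+1))^2 := by
        apply Finset.sum_le_sum
        intro a ha
        have ha' : a ≤ n := Nat.lt_succ_iff.mp (Finset.mem_range.mp ha)
        have key : ((n+1).choose a : ℝ) ≤ ((n:ℝ)+1) * (n+1).choose (a+1) := by
          exact_mod_cast choose_le_mul n a ha'
        have h1 : narayana (n+1) (a+1) ≤ (((n+1).choose (a+1) : ℝ))^2 := by
          rw [narayana, Nat.add_sub_cancel, div_le_iff₀ (by positivity)]
          push_cast
          nlinarith [Nat.cast_nonneg (α := ℝ) ((n+1).choose (a+1))]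
        calc narayana (n+1) (a+1) * (t^2)^(a+1)
            ≤ (((n+1).choose (a+1) : ℝ))^2 * (t^2)^(a+1) :=
              mul_le_mul_of_nonneg_right h1 (by positivity)
          _ = ((((n+1).choose (a+1) : ℝ)) * t^(a+1))^2 := by ring
    _ ≤ ∑ k ∈ Finset.range (n+2), ((((n+1).choose k : ℝ)) * t^k)^2 := by
        rw [Finset.sum_range_succ' (fun k => ((((n+1).choose k : ℝ)) * t^k)^2) (n+1)]
        exact le_add_of_nonneg_right (by positivity)
    _ ≤ (∑ k ∈ Finset.range (n+2), (((n+1).choose k : ℝ)) * t^k)^2 :=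
        Finset.sum_sq_le_sq_sum_of_nonneg (fun i _ => by positivity)
    _ = ((1+t)^(n+1))^2 := by rw [expand]

lemma lower (n : ℕ) (t : ℝ) (ht : 0 ≤ t) :
    t^2 * ((1+t)^n)^2 ≤ ((n:ℝ)+1)^2 * betaPoly (n+1) (t^2) := by
  have h1 : t^2 * ((1+t)^n)^2 = (∑ k ∈ Finset.range (n+1), (n.choose k : ℝ) * t^(k+1))^2 := by
    rw [expand, ← mul_pow, Finset.mul_sum]
    congr 1
    exact Finset.sum_congr rfl fun k _ => by ring
  rw [h1, betaPoly_eq, Finset.mul_sum]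
  calc (∑ k ∈ Finset.range (n+1), (n.choose k : ℝ) * t^(k+1))^2
      ≤ (Finset.range (n+1)).card * ∑ k ∈ Finset.range (n+1), ((n.choose k : ℝ) * t^(k+1))^2 :=
        sq_sum_le_card_mul_sum_sq
    _ = ∑ k ∈ Finset.range (n+1), ((n:ℝ)+1) * ((n.choose k : ℝ)^2 * (t^2)^(k+1)) := by
        rw [Finset.card_range, Finset.mul_sum]
        push_cast
        exact Finset.sum_congr rfl fun k _ => by ring
    _ ≤ ∑ a ∈ Finset.range (n+1), ((n:ℝ)+1)^2 * (narayana (n+1) (a+1) * (t^2)^(a+1)) := by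
        apply Finset.sum_le_sum
        intro a _
        have key : ((n.choose a : ℝ))^2 ≤ ((n+1).choose a : ℝ) * ((n+1).choose (a+1) : ℝ) := by
          exact_mod_cast choose_sq_le n a
        have hT : (0:ℝ) ≤ (t^2)^(a+1) := by positivity
        have h2 : narayana (n+1) (a+1)
            = (((n+1).choose a : ℝ) * ((n+1).choose (a+1) : ℝ)) / ((n:ℝ)+1) := by
          rw [narayana, Nat.add_sub_cancel]; push_cast; ring
        rw [h2]
        have h3 : ((n:ℝ)+1)^2 * ((((n+1).choose a : ℝ) * ((n+1).choose (a+1) : ℝ)) / ((n:ℝ)+1)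
              * (t^2)^(a+1))
            = ((n:ℝ)+1) * ((((n+1).choose a : ℝ) * ((n+1).choose (a+1) : ℝ)) * (t^2)^(a+1)) := by
          field_simp
        rw [h3]
        exact mul_le_mul_of_nonneg_left (mul_le_mul_of_nonneg_right key hT) (by positivity)

end BetaAux

/-- For every real `x > 0` and every integer `m ≥ 1`,
`(x/(2m²(1+√x)³))·(1+√x)^{2m} ≤ β_m(x) ≤ (1+√x)^{2m}`. -/
theorem betaPoly_bounds (x : ℝ) (hx : 0 < x) (m : ℕ) (hm : 1 ≤ m) :
    x / (2 * (m : ℝ) ^ 2 * (1 + Real.sqrt x) ^ 3) * (1 + Real.sqrt x) ^ (2 * m) ≤ betaPoly m x ∧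
    betaPoly m x ≤ (1 + Real.sqrt x) ^ (2 * m) := by
  obtain ⟨n, rfl⟩ : ∃ n, m = n + 1 := ⟨m - 1, by omega⟩
  have ht : 0 < Real.sqrt x := Real.sqrt_pos.mpr hx
  set t := Real.sqrt x with htdef
  have hx2 : t ^ 2 = x := Real.sq_sqrt hx.le
  have hb : 0 ≤ betaPoly (n+1) x := BetaAux.betaPoly_nonneg _ _ hx.le
  constructor
  · rw [div_mul_eq_mul_div, div_le_iff₀ (by positivity)]
    have key := BetaAux.lower n t ht.le
    rw [hx2] at key
    have e1 : (1+t)^(2*(n+1)) = ((1+t)^n)^2 * (1+t)^2 := by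
      rw [← pow_mul, ← pow_add]
      congr 1
      ring
    have h3 : (1+t)^2 ≤ 2*(1+t)^3 := by nlinarith [ht.le]
    calc x * (1+t)^(2*(n+1)) = (x*((1+t)^n)^2) * (1+t)^2 := by rw [e1]; ring
      _ ≤ (((n:ℝ)+1)^2 * betaPoly (n+1) x) * (1+t)^2 :=
          mul_le_mul_of_nonneg_right key (by positivity)
      _ ≤ (((n:ℝ)+1)^2 * betaPoly (n+1) x) * (2*(1+t)^3) :=
          mul_le_mul_of_nonneg_left h3 (mul_nonneg (by positivity) hb)
      _ = betaPoly (n+1) x * (2 * ((n+1 : ℕ) : ℝ) ^ 2 * (1+t) ^ 3) := by push_cast; ring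
  · have key := BetaAux.upper n t ht.le
    rw [hx2] at key
    calc betaPoly (n+1) x ≤ ((1+t)^(n+1))^2 := key
      _ = (1+t)^(2*(n+1)) := by rw [← pow_mul, Nat.mul_comm]


end
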